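/- Let a, d be complex numbers, let α = (α_i)_{i≥0} be the arithmetical sequence with α_i = a + i·d, and let β = (β_i)_{i≥0} be the alternating sequence with β_i = (-1)^i · a. Then for every positive integer n, det(P_{α,β}(n)) = a(2d + a)^{n-1}. -/

import Mathlib

open Matrix

/-- Entry `P_{i,j}` of the generalized Pascal triangle associated to sequences `α`, `β`:
`P_{i,0} = α i`, `P_{0,j} = β j`, and `P_{i,j} = P_{i-1,j} + P_{i,j-1}` for `i, j ≥ 1`. -/
def pascalEntry {R : Type*} [CommRing R] (α β : ℕ → R) : ℕ → ℕ → R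
  | i, 0 => α i
  | 0, j + 1 => β (j + 1)
  | i + 1, j + 1 => pascalEntry α β i (j + 1) + pascalEntry α β (i + 1) j

/-- The generalized Pascal triangle `P_{α,β}(n)`. -/
def genPascal {R : Type*} [CommRing R] (α β : ℕ → R) (n : ℕ) :
    Matrix (Fin n) (Fin n) R :=
  Matrix.of fun i j => pascalEntry α β (i : ℕ) (j : ℕ)

/-- The Töplitz matrix `T_{α,β}(n)`: `t_{i,j} = α_{i-j}` if `i ≥ j`, else `β_{j-i}`. -/
def toeplitz {R : Type*} [CommRing R] (α β : ℕ → R) (n : ℕ) :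
    Matrix (Fin n) (Fin n) R :=
  Matrix.of fun i j => if (j : ℕ) ≤ (i : ℕ) then α ((i : ℕ) - (j : ℕ)) else β ((j : ℕ) - (i : ℕ))

/-- The unipotent lower triangular matrix `L(n)` with `L_{i,j} = C(i,j)` for `i ≥ j`. -/
def lowerL (R : Type*) [CommRing R] (n : ℕ) : Matrix (Fin n) (Fin n) R :=
  Matrix.of fun i j => if (j : ℕ) ≤ (i : ℕ) then ((i : ℕ).choose (j : ℕ) : R) else 0

/-- The binomial inverse transform `α̂_i = ∑_{k=0}^{i} (-1)^{i+k} C(i,k) α_k`. -/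
def hatSeq {R : Type*} [CommRing R] (α : ℕ → R) (i : ℕ) : R :=
  ∑ k ∈ Finset.range (i + 1), (-1 : R) ^ (i + k) * (i.choose k : R) * α k

/-- The binomial transform `α̌_i = ∑_{k=0}^{i} C(i,k) α_k`. -/
def checkSeq {R : Type*} [CommRing R] (α : ℕ → R) (i : ℕ) : R :=
  ∑ k ∈ Finset.range (i + 1), (i.choose k : R) * α k

namespace DetGenPascalAux

open Finset

noncomputable def ahAux (a d : ℂ) : ℕ → ℂ
  | 0 => a
  | 1 => d
  | _ => 0

noncomputable def tAux (a d : ℂ) (k l : ℕ) : ℂ :=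
  if l ≤ k then ahAux a d (k - l) else (-2)^(l-k) * a

noncomputable def SAux (a d : ℂ) (i j : ℕ) : ℂ :=
  ∑ k ∈ range (i+1), (i.choose k : ℂ) * ∑ l ∈ range (j+1), (j.choose l : ℂ) * tAux a d k l

lemma sum_choose_ah (a d : ℂ) (i : ℕ) :
    ∑ k ∈ range (i+1), (i.choose k : ℂ) * ahAux a d k = a + i * d := by
  match i with
  | 0 => simp [ahAux]
  | 1 => simp [Finset.sum_range_succ, ahAux]
  | (m+2) =>
    rw [← Finset.sum_subset (Finset.range_subset_range.2 (show 2 ≤ m+2+1 by omega))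
      (fun x _ hx => by
        have : 2 ≤ x := by simp at hx; omega
        match x, this with
        | (y+2), _ => simp [ahAux])]
    rw [Finset.sum_range_succ, Finset.sum_range_succ]
    simp [ahAux]

lemma SAux_row0 (a d : ℂ) (i : ℕ) : SAux a d i 0 = a + i * d := by
  have h : ∀ k, tAux a d k 0 = ahAux a d k := fun k => by simp [tAux]
  rw [SAux]
  rw [show (0:ℕ)+1 = 1 from rfl]
  simp only [Finset.sum_range_one, Nat.choose_zero_right, Nat.cast_one, one_mul, h]
  exact sum_choose_ah a d i

lemma SAux_col0 (a d : ℂ) (j : ℕ) : SAux a d 0 j = (-1)^j * a := by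
  have h : ∀ l, tAux a d 0 l = (-2)^l * a := by
    intro l
    cases l with
    | zero => simp [tAux, ahAux]
    | succ m => simp [tAux]
  rw [SAux]
  rw [show (0:ℕ)+1 = 1 from rfl]
  simp only [Finset.sum_range_one, Nat.choose_zero_right, Nat.cast_one, one_mul, h]
  have hb := add_pow (-2 : ℂ) 1 j
  simp at hb
  rw [show (-1:ℂ) = -2 + 1 by ring, hb]
  rw [Finset.sum_mul]
  apply Finset.sum_congr rfl
  intro k _
  ring

lemma tAux_shift (a d : ℂ) (k l : ℕ) : tAux a d (k+1) (l+1) = tAux a d k l := by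
  simp [tAux, Nat.succ_sub_succ]

lemma binom_split (i : ℕ) (f : ℕ → ℂ) :
    ∑ k ∈ range (i+2), ((i+1).choose k : ℂ) * f k
      = ∑ k ∈ range (i+1), (i.choose k : ℂ) * f k
        + ∑ k ∈ range (i+1), (i.choose k : ℂ) * f (k+1) := by
  rw [Finset.sum_range_succ' (fun k => ((i+1).choose k : ℂ) * f k)]
  simp_rw [Nat.choose_succ_succ, Nat.cast_add, add_mul, Finset.sum_add_distrib]
  rw [Finset.sum_range_succ' (fun k => (i.choose k : ℂ) * f k)]
  rw [Finset.sum_range_succ (fun k => (i.choose (k+1) : ℂ) * f (k+1))]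
  simp [Nat.choose_succ_self]
  ring

lemma SAux_rec (a d : ℂ) (i j : ℕ) :
    SAux a d (i+1) (j+1) = SAux a d i (j+1) + SAux a d (i+1) j := by
  set F : ℕ → ℂ := fun k => ∑ l ∈ range (j+2), ((j+1).choose l : ℂ) * tAux a d k l with hF
  set G : ℕ → ℂ := fun k => ∑ l ∈ range (j+1), (j.choose l : ℂ) * tAux a d k l with hG
  have hFG : ∀ k, F (k+1) = G k + G (k+1) := by
    intro k
    rw [hF]
    simp only
    rw [binom_split j (fun l => tAux a d (k+1) l)]
    simp_rw [tAux_shift]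
    rw [add_comm]
  have h1 : SAux a d (i+1) (j+1) = ∑ k ∈ range (i+1), (i.choose k : ℂ) * F k
      + ∑ k ∈ range (i+1), (i.choose k : ℂ) * F (k+1) := by
    rw [SAux, show i+1+1 = i+2 from rfl]
    exact binom_split i F
  have h2 : SAux a d (i+1) j = ∑ k ∈ range (i+1), (i.choose k : ℂ) * G k
      + ∑ k ∈ range (i+1), (i.choose k : ℂ) * G (k+1) := by
    rw [SAux, show i+1+1 = i+2 from rfl]
    exact binom_split i G
  have h3 : SAux a d i (j+1) = ∑ k ∈ range (i+1), (i.choose k : ℂ) * F k := rfl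
  rw [h1, h2, h3]
  have key : ∑ k ∈ range (i+1), (i.choose k : ℂ) * F (k+1)
      = ∑ k ∈ range (i+1), (i.choose k : ℂ) * G k
        + ∑ k ∈ range (i+1), (i.choose k : ℂ) * G (k+1) := by
    rw [← Finset.sum_add_distrib]
    exact Finset.sum_congr rfl fun k _ => by rw [hFG]; ring
  rw [key]

lemma pascal_eq_SAux (a d : ℂ) (i j : ℕ) :
    pascalEntry (fun i => a + (i : ℂ) * d) (fun i => (-1 : ℂ) ^ i * a) i j = SAux a d i j := by
  induction i generalizing j with
  | zero =>
    cases j with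
    | zero => rw [SAux_row0]; simp [pascalEntry]
    | succ m => rw [SAux_col0]; simp [pascalEntry]
  | succ n ih =>
    induction j with
    | zero => rw [SAux_row0]; simp [pascalEntry]
    | succ m ihj =>
      rw [pascalEntry, ih, ihj, SAux_rec]

/-- Convert a `Fin` sum against the lower-triangular binomial row into a range sum. -/
lemma fin_sum_lower {n : ℕ} (i : Fin n) (g : ℕ → ℂ) :
    ∑ k : Fin n, (if (k:ℕ) ≤ (i:ℕ) then (((i:ℕ).choose (k:ℕ)) : ℂ) else 0) * g (k:ℕ)
      = ∑ k ∈ range ((i:ℕ)+1), (((i:ℕ).choose k : ℂ)) * g k := by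
  rw [Fin.sum_univ_eq_sum_range (fun k => (if k ≤ (i:ℕ) then (((i:ℕ).choose k) : ℂ) else 0) * g k)]
  rw [← Finset.sum_subset (Finset.range_subset_range.2 (show (i:ℕ)+1 ≤ n from i.isLt))
    (fun x _ hx => by
      have : ¬ x ≤ (i:ℕ) := by simpa using hx
      rw [if_neg this, zero_mul])]
  apply Finset.sum_congr rfl
  intro k hk
  rw [if_pos (Nat.lt_succ_iff.1 (Finset.mem_range.1 hk))]

lemma factorization (a d : ℂ) (n : ℕ) :
    genPascal (fun i => a + (i : ℂ) * d) (fun i => (-1 : ℂ) ^ i * a) n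
      = lowerL ℂ n * (Matrix.of fun i j : Fin n => tAux a d (i:ℕ) (j:ℕ)) * (lowerL ℂ n)ᵀ := by
  ext i j
  show pascalEntry (fun i => a + (i : ℂ) * d) (fun i => (-1 : ℂ) ^ i * a) (i:ℕ) (j:ℕ) = _
  rw [pascal_eq_SAux, SAux]
  rw [Matrix.mul_apply]
  simp_rw [Matrix.mul_apply, Finset.sum_mul]
  rw [Finset.sum_comm]
  have hform : ∀ k : Fin n, (∑ l : Fin n,
        lowerL ℂ n i k * Matrix.of (fun i j : Fin n => tAux a d (i:ℕ) (j:ℕ)) k l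
          * (lowerL ℂ n)ᵀ l j)
      = (if (k:ℕ) ≤ (i:ℕ) then (((i:ℕ).choose (k:ℕ)) : ℂ) else 0)
          * ∑ l : Fin n, (if (l:ℕ) ≤ (j:ℕ) then (((j:ℕ).choose (l:ℕ)) : ℂ) else 0)
            * tAux a d (k:ℕ) (l:ℕ) := by
    intro k
    rw [Finset.mul_sum]
    apply Finset.sum_congr rfl
    intro l _
    simp only [lowerL, Matrix.transpose_apply, Matrix.of_apply]
    ring
  simp_rw [hform]
  rw [fin_sum_lower i (fun k => ∑ l : Fin n,
      (if (l:ℕ) ≤ (j:ℕ) then (((j:ℕ).choose (l:ℕ)) : ℂ) else 0) * tAux a d k (l:ℕ))]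
  apply Finset.sum_congr rfl
  intro k _
  rw [fin_sum_lower j (fun l => tAux a d k l)]


lemma det_lowerL (n : ℕ) : (lowerL ℂ n).det = 1 := by
  rw [Matrix.det_of_lowerTriangular (lowerL ℂ n)
    (by
      intro i j h
      have hij : (i:ℕ) < (j:ℕ) := h
      exact if_neg (by omega))]
  simp [lowerL]

lemma det_T (a d : ℂ) (m : ℕ) :
    (Matrix.of fun i j : Fin (m+1) => tAux a d (i:ℕ) (j:ℕ)).det = a * (a + 2*d)^m := by
  have hdet := Matrix.det_eq_of_forall_col_eq_smul_add_pred
    (A := Matrix.of fun i j : Fin (m+1) => tAux a d (i:ℕ) (j:ℕ))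
    (B := Matrix.of fun i j : Fin (m+1) =>
      tAux a d (i:ℕ) (j:ℕ) + (if (j:ℕ) = 0 then 0 else 2 * tAux a d (i:ℕ) ((j:ℕ)-1)))
    (c := fun _ => (-2 : ℂ))
    (by intro i; simp)
    (by
      intro i j
      simp only [Matrix.of_apply, Fin.val_succ, Fin.coe_castSucc]
      rw [if_neg (by omega)]
      simp only [Nat.add_sub_cancel]
      ring)
  rw [hdet]
  rw [Matrix.det_of_lowerTriangular _
    (by
      intro i j h
      have hij : (i:ℕ) < (j:ℕ) := h
      simp only [Matrix.of_apply]
      rw [if_neg (by omega)]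
      rcases Nat.lt_or_ge ((i:ℕ)+1) (j:ℕ) with hc | hc
      · -- j - 1 > i
        rw [tAux, if_neg (by omega), tAux, if_neg (by omega)]
        have : (j:ℕ) - (i:ℕ) = ((j:ℕ) - 1 - (i:ℕ)) + 1 := by omega
        rw [this, pow_succ]
        ring
      · -- j = i + 1
        have hji : (j:ℕ) = (i:ℕ) + 1 := by omega
        rw [tAux, if_neg (by omega), tAux, if_pos (by omega)]
        have h1 : (j:ℕ) - (i:ℕ) = 1 := by omega
        have h2 : (i:ℕ) - ((j:ℕ) - 1) = 0 := by omega
        rw [h1, h2]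
        have h3 : ahAux a d 0 = a := rfl
        rw [h3]
        ring)]
  have hdiag : ∀ i : Fin (m+1),
      (Matrix.of fun i j : Fin (m+1) =>
        tAux a d (i:ℕ) (j:ℕ) + (if (j:ℕ) = 0 then 0 else 2 * tAux a d (i:ℕ) ((j:ℕ)-1))) i i
      = if (i:ℕ) = 0 then a else a + 2*d := by
    intro i
    simp only [Matrix.of_apply]
    rcases Nat.eq_zero_or_pos (i:ℕ) with h0 | h0
    · rw [if_pos h0, if_pos h0, tAux, if_pos le_rfl]
      simp [ahAux]
    · rw [if_neg (by omega), if_neg (by omega), tAux, if_pos le_rfl, Nat.sub_self,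
        tAux, if_pos (by omega)]
      have h3 : (i:ℕ) - ((i:ℕ) - 1) = 1 := by omega
      rw [h3]
      have h4 : ahAux a d 1 = d := rfl
      have h5 : ahAux a d 0 = a := rfl
      rw [h4, h5]
  rw [Finset.prod_congr rfl (fun i _ => hdiag i)]
  rw [Fin.prod_univ_succ]
  simp [Fin.val_succ]

end DetGenPascalAux

/-- for `α_i = a + i d` and the alternating sequence `β_i = (-1)^i a`,
`det(P_{α,β}(n)) = a (2d + a)^{n-1}`. -/
theorem det_genPascal_arith_alternating (a d : ℂ) (n : ℕ) (hn : 0 < n) :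
    (genPascal (fun i => a + (i : ℂ) * d) (fun i => (-1 : ℂ) ^ i * a) n).det =
      a * (2 * d + a) ^ (n - 1) := by
  obtain ⟨m, rfl⟩ : ∃ m, n = m + 1 := ⟨n - 1, by omega⟩
  rw [DetGenPascalAux.factorization a d (m+1)]
  rw [Matrix.det_mul, Matrix.det_mul, Matrix.det_transpose, DetGenPascalAux.det_lowerL,
    DetGenPascalAux.det_T, Nat.add_sub_cancel]
  ring
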